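/- The sequence r ↦ C_{b,r} = Π_p (1 − p^{−b1} + p^{−b1}(1 − p^{−b2})^r) is decreasing in r and converges to 1/ζ(b1) = Π_p(1 − p^{−b1}) as r → ∞, provided b1 ≥ 2. -/

import Mathlib

open Filter

private lemma aux_exp_tprod {ι : Type*} (f : ι → ℝ) (hf : ∀ i, 0 < f i)
    (h : Summable fun i => Real.log (f i)) :
    ∏' i, f i = Real.exp (∑' i, Real.log (f i)) := by
  have := Real.rexp_tsum_eq_tprod (f := f) hf h
  exact this.symm

private lemma aux_log_bound {x z : ℝ} (hx0 : 0 < x) (hx4 : x ≤ 1/4)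
    (h1 : 1 - x ≤ z) (h2 : z ≤ 1) : |Real.log z| ≤ 2 * x := by
  have hz : 0 < z := by linarith
  have hlz : Real.log z ≤ 0 := Real.log_nonpos (by linarith) h2
  have h3 : (0:ℝ) < 1 - x := by linarith
  have h4 : Real.log (1 - x) ≤ Real.log z := Real.log_le_log h3 h1
  have h5 : Real.log (1-x)⁻¹ ≤ (1-x)⁻¹ - 1 := Real.log_le_sub_one_of_pos (by positivity)
  rw [Real.log_inv] at h5
  have h6 : (1-x)⁻¹ ≤ 1 + 2*x := by
    rw [inv_le_iff_one_le_mul₀ h3]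
    nlinarith
  rw [abs_of_nonpos hlz]
  linarith

private lemma aux_main {ι : Type*} (x y : ι → ℝ) (hx0 : ∀ i, 0 < x i)
    (hx4 : ∀ i, x i ≤ 1/4) (hy0 : ∀ i, 0 < y i) (hy4 : ∀ i, y i ≤ 1/4)
    (hsum : Summable x) :
    (∀ r : ℕ, (∏' i, (1 - x i + x i * (1 - y i)^(r+1))) ≤
        ∏' i, (1 - x i + x i * (1 - y i)^r)) ∧
    Tendsto (fun r : ℕ => ∏' i, (1 - x i + x i * (1 - y i)^r)) atTop
      (nhds (∏' i, (1 - x i))) ∧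
    Summable (fun i => Real.log (1 - x i)) := by
  have hy01 : ∀ i, (0:ℝ) ≤ 1 - y i := fun i => by have := hy4 i; linarith
  have hy1 : ∀ i, 1 - y i < 1 := fun i => by have := hy0 i; linarith
  have hpow0 : ∀ r i, (0:ℝ) ≤ (1 - y i)^r := fun r i => pow_nonneg (hy01 i) r
  have hpow1 : ∀ r i, (1 - y i)^r ≤ 1 := fun r i => pow_le_one₀ (hy01 i) (hy1 i).le
  have hglb : ∀ r i, 1 - x i ≤ 1 - x i + x i * (1 - y i)^r := fun r i => by
    nlinarith [hx0 i, hpow0 r i]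
  have hgub : ∀ r i, 1 - x i + x i * (1 - y i)^r ≤ 1 := fun r i => by
    nlinarith [hx0 i, hpow1 r i]
  have hgpos : ∀ r i, 0 < 1 - x i + x i * (1 - y i)^r := fun r i => by
    have := hglb r i; have := hx4 i; linarith
  have hlbound : ∀ r i, |Real.log (1 - x i + x i * (1 - y i)^r)| ≤ 2 * x i :=
    fun r i => aux_log_bound (hx0 i) (hx4 i) (hglb r i) (hgub r i)
  have hsum2 : Summable fun i => 2 * x i := hsum.mul_left 2
  have hlogsum : ∀ r, Summable fun i => Real.log (1 - x i + x i * (1 - y i)^r) := fun r =>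
    Summable.of_norm_bounded hsum2 (fun i => by
      rw [Real.norm_eq_abs]; exact hlbound r i)
  have hlogsum' : Summable fun i => Real.log (1 - x i) :=
    Summable.of_norm_bounded hsum2 (fun i => by
      rw [Real.norm_eq_abs]
      exact aux_log_bound (hx0 i) (hx4 i) le_rfl (by have := hx0 i; linarith))
  have hpe : ∀ r, (∏' i, (1 - x i + x i * (1 - y i)^r)) =
      Real.exp (∑' i, Real.log (1 - x i + x i * (1 - y i)^r)) := fun r =>
    aux_exp_tprod _ (hgpos r) (hlogsum r)
  have hpe' : (∏' i, (1 - x i)) = Real.exp (∑' i, Real.log (1 - x i)) :=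
    aux_exp_tprod _ (fun i => by have := hx0 i; have := hx4 i; linarith) hlogsum'
  refine ⟨?_, ?_, hlogsum'⟩
  · intro r
    rw [hpe r, hpe (r+1), Real.exp_le_exp]
    refine Summable.tsum_le_tsum (fun i => ?_) (hlogsum (r+1)) (hlogsum r)
    refine Real.log_le_log (hgpos _ _) ?_
    have : (1 - y i)^(r+1) ≤ (1 - y i)^r :=
      pow_le_pow_of_le_one (hy01 i) (hy1 i).le (Nat.le_succ r)
    nlinarith [hx0 i]
  · have h1 : Tendsto (fun r : ℕ => ∑' i, Real.log (1 - x i + x i * (1 - y i)^r)) atTop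
        (nhds (∑' i, Real.log (1 - x i))) := by
      refine tendsto_tsum_of_dominated_convergence hsum2 (fun i => ?_)
        (Eventually.of_forall fun r i => by rw [Real.norm_eq_abs]; exact hlbound r i)
      have hp : Tendsto (fun r : ℕ => (1 - y i)^r) atTop (nhds 0) :=
        tendsto_pow_atTop_nhds_zero_of_lt_one (hy01 i) (hy1 i)
      have hg : Tendsto (fun r : ℕ => 1 - x i + x i * (1 - y i)^r) atTop (nhds (1 - x i)) := by
        have := (tendsto_const_nhds (x := (1 - x i : ℝ)) (f := atTop (α := ℕ))).add
          ((tendsto_const_nhds (x := (x i : ℝ))).mul hp)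
        simpa using this
      exact ((Real.continuousAt_log (by have := hx0 i; have := hx4 i; intro h; nlinarith [h])).tendsto.comp hg)
    have h2 := (Real.continuous_exp.continuousAt.tendsto.comp h1)
    rw [hpe']
    refine h2.congr fun r => (hpe r).symm

theorem stmt_14 (b1 b2 : ℕ) (hb1 : 2 ≤ b1) (hb : b1 ≤ b2) :
    (∀ r : ℕ, 1 ≤ r →
      (∏' p : Nat.Primes,
          (1 - 1 / (p : ℝ) ^ b1 + 1 / (p : ℝ) ^ b1 * (1 - 1 / (p : ℝ) ^ b2) ^ (r + 1)))
        ≤ ∏' p : Nat.Primes,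
            (1 - 1 / (p : ℝ) ^ b1 + 1 / (p : ℝ) ^ b1 * (1 - 1 / (p : ℝ) ^ b2) ^ r)) ∧
    Tendsto (fun r : ℕ => ∏' p : Nat.Primes,
        (1 - 1 / (p : ℝ) ^ b1 + 1 / (p : ℝ) ^ b1 * (1 - 1 / (p : ℝ) ^ b2) ^ r))
      atTop (nhds (∏' p : Nat.Primes, (1 - 1 / (p : ℝ) ^ b1))) ∧
    ((∏' p : Nat.Primes, (1 - 1 / (p : ℝ) ^ b1) : ℝ) : ℂ) = (riemannZeta b1)⁻¹ := by
  have hb2 : 2 ≤ b2 := hb1.trans hb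
  have hp2 : ∀ p : Nat.Primes, (2:ℝ) ≤ (p : ℝ) := fun p => by
    exact_mod_cast p.prop.two_le
  have key : ∀ b : ℕ, 2 ≤ b → ∀ p : Nat.Primes, (4:ℝ) ≤ (p:ℝ) ^ b := by
    intro b hbb p
    calc (4:ℝ) = 2 ^ 2 := by norm_num
    _ ≤ (2:ℝ) ^ b := pow_le_pow_right₀ one_le_two hbb
    _ ≤ (p:ℝ) ^ b := pow_le_pow_left₀ (by norm_num) (hp2 p) b
  have hx0 : ∀ b : ℕ, ∀ p : Nat.Primes, (0:ℝ) < 1 / (p:ℝ) ^ b := fun b p => by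
    have := hp2 p; positivity
  have hx4 : ∀ b : ℕ, 2 ≤ b → ∀ p : Nat.Primes, 1 / (p:ℝ) ^ b ≤ 1/4 := fun b hbb p => by
    have h4 := key b hbb p
    exact one_div_le_one_div_of_le (by norm_num) h4
  have hsum : Summable (fun p : Nat.Primes => 1 / (p:ℝ) ^ b1) := by
    have h : Summable (fun n : ℕ => 1 / (n:ℝ) ^ b1) := Real.summable_one_div_nat_pow.mpr (lt_of_lt_of_le one_lt_two hb1)
    exact h.comp_injective fun a b h => Subtype.ext (by exact_mod_cast h)
  obtain ⟨h1, h2, hlogsum⟩ := aux_main (fun p : Nat.Primes => 1 / (p:ℝ) ^ b1)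
    (fun p : Nat.Primes => 1 / (p:ℝ) ^ b2) (hx0 b1) (hx4 b1 hb1) (hx0 b2) (hx4 b2 hb2) hsum
  refine ⟨fun r _ => h1 r, h2, ?_⟩
  -- part 3
  have hpos : ∀ p : Nat.Primes, (0:ℝ) < 1 - 1 / (p:ℝ) ^ b1 := fun p => by
    have := hx4 b1 hb1 p; linarith
  have hprodR : HasProd (fun p : Nat.Primes => 1 - 1 / (p:ℝ) ^ b1)
      (∏' p : Nat.Primes, (1 - 1 / (p:ℝ) ^ b1)) := by
    rw [← Real.rexp_tsum_eq_tprod (f := fun p : Nat.Primes => 1 - 1 / (p:ℝ) ^ b1) hpos hlogsum]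
    exact Real.hasProd_of_hasSum_log (f := fun p : Nat.Primes => 1 - 1 / (p:ℝ) ^ b1) hpos hlogsum.hasSum
  have hprodC : HasProd (fun p : Nat.Primes => (1 : ℂ) - 1 / (p:ℂ) ^ b1)
      (((∏' p : Nat.Primes, (1 - 1 / (p:ℝ) ^ b1) : ℝ) : ℂ)) := by
    have := hprodR.map Complex.ofRealHom.toMonoidHom Complex.continuous_ofReal
    refine this.congr_fun fun p => ?_
    simp only [Function.comp_apply, RingHom.toMonoidHom_eq_coe, MonoidHom.coe_coe,
      Complex.ofRealHom_eq_coe]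
    push_cast
    ring
  have hs : 1 < ((b1 : ℂ)).re := by
    simp only [Complex.natCast_re]
    exact_mod_cast lt_of_lt_of_le one_lt_two hb1
  have hz := riemannZeta_eulerProduct_hasProd hs
  have hz' : HasProd (fun p : Nat.Primes => ((1:ℂ) - 1 / (p:ℂ) ^ b1)⁻¹) (riemannZeta b1) := by
    refine hz.congr_fun fun p => ?_
    rw [Complex.cpow_neg, Complex.cpow_natCast, one_div]
  have hne : ∀ p : Nat.Primes, ((1:ℂ) - 1 / (p:ℂ) ^ b1) ≠ 0 := fun p => by
    have : ((1:ℂ) - 1 / (p:ℂ) ^ b1) = ((1 - 1 / (p:ℝ) ^ b1 : ℝ) : ℂ) := by push_cast; ring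
    rw [this]
    exact_mod_cast (hpos p).ne'
  have hmul := hprodC.mul hz'
  have hone : HasProd (fun p : Nat.Primes =>
      ((1:ℂ) - 1 / (p:ℂ) ^ b1) * ((1:ℂ) - 1 / (p:ℂ) ^ b1)⁻¹) (1 : ℂ) :=
    hasProd_one.congr_fun fun p => mul_inv_cancel₀ (hne p)
  have heq : (((∏' p : Nat.Primes, (1 - 1 / (p:ℝ) ^ b1) : ℝ) : ℂ)) * riemannZeta b1 = 1 :=
    hmul.unique hone
  exact eq_inv_of_mul_eq_one_left heq
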